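/- Let N ≥ 2, d ≥ 1, τ > 0, and let x_i, v_i : [−τ,∞) → ℝ^d (i = 1,…,N) be continuous functions, continuously differentiable on (0,∞), satisfying for t > 0 the Cucker-Smale system with self-delay ẋ_i(t) = v_i(t) and v̇_i(t) = Σ_{j=1}^N ψ_ij(t−τ)(v_j(t−τ) − v_i(t−τ)), with the normalized weights ψ_ij(t) := ψ(|x_j(t) − x_i(t)|)/Σ_{ℓ=1}^N ψ(|x_ℓ(t) − x_i(t)|) for a continuous ψ : [0,∞) → (0,1]. Assume each initial velocity v_i is constant on [−τ,0], and that there exists C ∈ (0,1) such that Ψ(d_x^0 + d_v^0/C) − C ≥ 4τ e^{Cτ}(e^{Cτ} − 1)/(Cτ). Then sup_{t≥0} d_x(t) < ∞, lim_{t→∞} d_v(t) = 0, and d_v(t) ≤ d_v^0 e^{−Ct} for all t ≥ 0. -/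

import Mathlib

open Real Set Filter

/-- The diameter at time `t` of the configuration given by the trajectories `y`. -/
noncomputable def diamAt {N d : ℕ} (y : Fin N → ℝ → EuclideanSpace ℝ (Fin d)) (t : ℝ) : ℝ :=
  ⨆ p : Fin N × Fin N, ‖y p.1 t - y p.2 t‖

/-- The nonincreasing rearrangement `Ψ(u) = min_{s ∈ [0,u]} ψ(s)` of the influence function. -/
noncomputable def Psi (ψ : ℝ → ℝ) (u : ℝ) : ℝ := sInf (ψ '' Set.Icc 0 u)


lemma norm_le_diamAt {N d : ℕ} (y : Fin N → ℝ → EuclideanSpace ℝ (Fin d)) (t : ℝ) (i k : Fin N) :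
    ‖y i t - y k t‖ ≤ diamAt y t :=
  le_ciSup (f := fun p : Fin N × Fin N => ‖y p.1 t - y p.2 t‖)
    (Set.Finite.bddAbove (Set.finite_range _)) ((i, k) : Fin N × Fin N)

lemma diamAt_le {N d : ℕ} (hN : 0 < N) (y : Fin N → ℝ → EuclideanSpace ℝ (Fin d)) (t : ℝ)
    {c : ℝ} (h : ∀ i k, ‖y i t - y k t‖ ≤ c) : diamAt y t ≤ c := by
  haveI : Nonempty (Fin N) := Fin.pos_iff_nonempty.mp hN
  exact ciSup_le fun p => h p.1 p.2

lemma diamAt_nonneg {N d : ℕ} (hN : 0 < N) (y : Fin N → ℝ → EuclideanSpace ℝ (Fin d)) (t : ℝ) :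
    0 ≤ diamAt y t := by
  have := norm_le_diamAt y t ⟨0, hN⟩ ⟨0, hN⟩
  simpa using this

set_option maxHeartbeats 2000000 in
theorem flocking_CS_selfdelay_normalized_weights_constant_initial_velocity
    {N d : ℕ} (hN : 2 ≤ N) (hd : 1 ≤ d) {τ : ℝ} (hτ : 0 < τ)
    (x v : Fin N → ℝ → EuclideanSpace ℝ (Fin d))
    (hxc : ∀ i, ContinuousOn (x i) (Ici (-τ)))
    (hvc : ∀ i, ContinuousOn (v i) (Ici (-τ)))
    (ψ : ℝ → ℝ) (hψc : Continuous ψ) (hψ : ∀ s, 0 ≤ s → ψ s ∈ Ioc (0 : ℝ) 1)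
    (hx' : ∀ i, ∀ t, 0 < t → HasDerivAt (x i) (v i t) t)
    (hv' : ∀ i, ∀ t, 0 < t → HasDerivAt (v i)
      (∑ j, (ψ ‖x j (t - τ) - x i (t - τ)‖ /
          ∑ ℓ, ψ ‖x ℓ (t - τ) - x i (t - τ)‖) • (v j (t - τ) - v i (t - τ))) t)
    (hconst : ∀ i, ∀ t ∈ Icc (-τ) (0 : ℝ), v i t = v i 0)
    (dx0 dv0 : ℝ)
    (hdx0 : dx0 = sSup (diamAt x '' Icc (-τ) 0))
    (hdv0 : dv0 = sSup (diamAt v '' Icc (-τ) 0))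
    (C : ℝ) (hC : C ∈ Ioo (0 : ℝ) 1)
    (hcond : Psi ψ (dx0 + dv0 / C) - C ≥
      4 * τ * exp (C * τ) * (exp (C * τ) - 1) / (C * τ)) :
    BddAbove (diamAt x '' Ici 0) ∧
    Tendsto (diamAt v) atTop (nhds 0) ∧
    ∀ t, 0 ≤ t → diamAt v t ≤ dv0 * exp (-C * t) := by
  obtain ⟨hC0, hC1⟩ := hC
  have hN0 : 0 < N := by omega
  haveI : Nonempty (Fin N) := Fin.pos_iff_nonempty.mp hN0
  set u0 : ℝ := dx0 + dv0 / C with hu0def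
  set K : ℝ := exp (C * τ) * (exp (C * τ) - 1) / C with hKdef
  -- ψ basics
  have hψpos : ∀ (r : ℝ), 0 ≤ r → 0 < ψ r := fun r hr => (hψ r hr).1
  have hψle1 : ∀ (r : ℝ), 0 ≤ r → ψ r ≤ 1 := fun r hr => (hψ r hr).2
  have hsum_pos : ∀ (i : Fin N) (s : ℝ), 0 < ∑ ℓ, ψ ‖x ℓ s - x i s‖ := by
    intro i s
    exact Finset.sum_pos (fun ℓ _ => hψpos _ (norm_nonneg _)) Finset.univ_nonempty
  have hsum_leN : ∀ (i : Fin N) (s : ℝ), ∑ ℓ, ψ ‖x ℓ s - x i s‖ ≤ (N : ℝ) := by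
    intro i s
    calc ∑ ℓ, ψ ‖x ℓ s - x i s‖ ≤ ∑ _ℓ : Fin N, (1 : ℝ) :=
          Finset.sum_le_sum (fun ℓ _ => hψle1 _ (norm_nonneg _))
      _ = (N : ℝ) := by simp
  -- weights
  set w : Fin N → Fin N → ℝ → ℝ :=
    fun i j s => ψ ‖x j s - x i s‖ / ∑ ℓ, ψ ‖x ℓ s - x i s‖ with hwdef
  have hw_nonneg : ∀ i j s, 0 ≤ w i j s := fun i j s =>
    le_of_lt (div_pos (hψpos _ (norm_nonneg _)) (hsum_pos i s))
  have hw_sum : ∀ i s, ∑ j, w i j s = 1 := by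
    intro i s
    rw [hwdef]
    rw [← Finset.sum_div]
    exact div_self (ne_of_gt (hsum_pos i s))
  set V : Fin N → ℝ → EuclideanSpace ℝ (Fin d) :=
    fun i σ => ∑ j, w i j (σ - τ) • (v j (σ - τ) - v i (σ - τ)) with hVdef
  have hv'' : ∀ i, ∀ t, 0 < t → HasDerivAt (v i) (V i t) t := fun i t ht => hv' i t ht
  -- continuity of shifted trajectories on [0, ∞)
  have hmaps : MapsTo (fun σ : ℝ => σ - τ) (Ici (0:ℝ)) (Ici (-τ)) := by
    intro σ hσ
    simp only [mem_Ici] at *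
    linarith
  have hshiftc : Continuous (fun σ : ℝ => σ - τ) := continuous_id.sub continuous_const
  have hxcomp : ∀ i, ContinuousOn (fun σ => x i (σ - τ)) (Ici (0:ℝ)) :=
    fun i => (hxc i).comp hshiftc.continuousOn hmaps
  have hvcomp : ∀ i, ContinuousOn (fun σ => v i (σ - τ)) (Ici (0:ℝ)) :=
    fun i => (hvc i).comp hshiftc.continuousOn hmaps
  have hwc : ∀ i j, ContinuousOn (fun σ => w i j (σ - τ)) (Ici (0:ℝ)) := by
    intro i j
    apply ContinuousOn.div
    · exact hψc.comp_continuousOn ((hxcomp j).sub (hxcomp i)).norm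
    · apply continuousOn_finset_sum
      intro ℓ _
      exact hψc.comp_continuousOn ((hxcomp ℓ).sub (hxcomp i)).norm
    · intro σ _
      exact ne_of_gt (hsum_pos i (σ - τ))
  have hVc : ∀ i, ContinuousOn (V i) (Ici (0:ℝ)) := by
    intro i
    apply continuousOn_finset_sum
    intro j _
    exact (hwc i j).smul ((hvcomp j).sub (hvcomp i))
  -- initial data facts
  have hτ0 : (-τ) ≤ 0 := by linarith
  have h0mem : (0:ℝ) ∈ Icc (-τ) 0 := ⟨hτ0, le_rfl⟩
  have hv_init_eq : ∀ s ∈ Icc (-τ) (0:ℝ), diamAt v s = diamAt v 0 := by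
    intro s hs
    unfold diamAt
    congr 1
    ext p
    rw [hconst p.1 s hs, hconst p.2 s hs]
  have himg : diamAt v '' Icc (-τ) 0 = {diamAt v 0} := by
    apply Subset.antisymm
    · rintro _ ⟨s, hs, rfl⟩
      simp [hv_init_eq s hs]
    · rintro _ rfl
      exact ⟨0, h0mem, rfl⟩
  have hdv0_eq : dv0 = diamAt v 0 := by rw [hdv0, himg, csSup_singleton]
  have hdv0_nonneg : 0 ≤ dv0 := hdv0_eq ▸ diamAt_nonneg hN0 v 0
  have hDvinit : ∀ s ∈ Icc (-τ) (0:ℝ), diamAt v s ≤ dv0 := by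
    intro s hs
    rw [hdv0_eq, hv_init_eq s hs]
  -- x initial bound via compactness
  have hdx_bdd : BddAbove (diamAt x '' Icc (-τ) 0) := by
    have hM : ∀ p : Fin N × Fin N, ∃ M : ℝ, ∀ s ∈ Icc (-τ) (0:ℝ),
        ‖x p.1 s - x p.2 s‖ ≤ M := by
      intro p
      obtain ⟨z, hz, hzmax⟩ := isCompact_Icc.exists_isMaxOn ⟨0, h0mem⟩
        (((hxc p.1).mono (Icc_subset_Ici_self)).sub
          ((hxc p.2).mono (Icc_subset_Ici_self))).norm
      exact ⟨‖x p.1 z - x p.2 z‖, fun s hs => hzmax hs⟩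
    choose M hMle using hM
    refine ⟨⨆ p, M p, ?_⟩
    rintro _ ⟨s, hs, rfl⟩
    refine ciSup_le fun p => ?_
    exact le_trans (hMle p s hs) (le_ciSup (Set.Finite.bddAbove (Set.finite_range M)) p)
  have hdx_init : ∀ s ∈ Icc (-τ) (0:ℝ), diamAt x s ≤ dx0 := by
    intro s hs
    rw [hdx0]
    exact le_csSup hdx_bdd ⟨s, hs, rfl⟩
  have hdx0_nonneg : 0 ≤ dx0 := le_trans (diamAt_nonneg hN0 x 0) (hdx_init 0 h0mem)
  have hu0_nonneg : 0 ≤ u0 := by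
    rw [hu0def]
    have : 0 ≤ dv0 / C := div_nonneg hdv0_nonneg (le_of_lt hC0)
    linarith
  -- Psi facts
  have hPsi_le : ∀ r, 0 ≤ r → r ≤ u0 → Psi ψ u0 ≤ ψ r := by
    intro r hr0 hru
    apply csInf_le
    · refine ⟨0, ?_⟩
      rintro _ ⟨r', hr', rfl⟩
      exact le_of_lt (hψpos r' hr'.1)
    · exact ⟨r, ⟨hr0, hru⟩, rfl⟩
  have hPsi_le_one : Psi ψ u0 ≤ 1 :=
    le_trans (hPsi_le 0 le_rfl hu0_nonneg) (hψle1 0 le_rfl)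
  -- arithmetic on the constants
  have hexp1 : 1 ≤ exp (C * τ) := one_le_exp (le_of_lt (mul_pos hC0 hτ))
  have hK_nonneg : 0 ≤ K := by
    rw [hKdef]
    apply div_nonneg _ (le_of_lt hC0)
    have := exp_pos (C * τ)
    nlinarith
  have hcond' : C + 4 * K ≤ Psi ψ u0 := by
    have h4K : 4 * τ * exp (C * τ) * (exp (C * τ) - 1) / (C * τ) = 4 * K := by
      rw [hKdef]
      field_simp
    rw [h4K] at hcond
    rw [hu0def]
    linarith [hcond]
  have harith : (1 - Psi ψ u0) * exp (C * τ) + 2 * K ≤ 1 - C := by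
    set e := exp (C * τ) with hedef
    have hKC : K * C = e * (e - 1) := by
      rw [hKdef]
      field_simp
    have h1 : (1 - Psi ψ u0) * e ≤ (1 - C - 4 * K) * e := by
      apply mul_le_mul_of_nonneg_right _ (by linarith)
      linarith
    have h2 : (1 - C - 4 * K) * e + 2 * K ≤ 1 - C := by
      nlinarith [hKC, hexp1, hC0, hC1, hK_nonneg]
    linarith
  -- exponential integral computation
  have hexpder : ∀ (c e t0 : ℝ) (σ : ℝ), c ≠ 0 →
      HasDerivAt (fun σ : ℝ => -(e / c) * exp (-c * (σ - t0))) (e * exp (-c * (σ - t0))) σ := by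
    intro c e t0 σ hc
    have h1 : HasDerivAt (fun σ : ℝ => -c * (σ - t0)) (-c) σ := by
      simpa using ((hasDerivAt_id σ).sub_const t0).const_mul (-c)
    have h3 := (h1.exp).const_mul (-(e / c))
    refine h3.congr_deriv ?_
    linear_combination (e * exp (-c * (σ - t0))) * mul_inv_cancel₀ hc
  have hexpcont : ∀ (c e t0 : ℝ),
      Continuous (fun σ : ℝ => e * exp (-c * (σ - t0))) :=
    fun c e t0 => continuous_const.mul
      ((continuous_const.mul (continuous_id.sub continuous_const)).rexp)
  have expint' : ∀ (c e t0 a b : ℝ), c ≠ 0 → ∫ σ in a..b, e * exp (-c * (σ - t0)) =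
      e / c * (exp (-c * (a - t0)) - exp (-c * (b - t0))) := by
    intro c e t0 a b hc
    rw [intervalIntegral.integral_eq_sub_of_hasDerivAt
      (fun σ _ => hexpder c e t0 σ hc) ((hexpcont c e t0).intervalIntegrable a b)]
    ring
  have expint : ∀ (a b : ℝ), a ≤ b → ∫ σ in a..b, dv0 * exp (-C * (σ - τ)) =
      dv0 / C * (exp (-C * (a - τ)) - exp (-C * (b - τ))) :=
    fun a b _ => expint' C dv0 τ a b (ne_of_gt hC0)
  -- norm of the velocity derivative is bounded by the delayed diameter
  have hVnorm : ∀ i σ, ‖V i σ‖ ≤ diamAt v (σ - τ) := by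
    intro i σ
    calc ‖V i σ‖ ≤ ∑ j, ‖w i j (σ - τ) • (v j (σ - τ) - v i (σ - τ))‖ := norm_sum_le _ _
      _ ≤ ∑ j, w i j (σ - τ) * diamAt v (σ - τ) := by
          apply Finset.sum_le_sum
          intro j _
          rw [norm_smul, Real.norm_eq_abs, abs_of_nonneg (hw_nonneg i j _)]
          exact mul_le_mul_of_nonneg_left (norm_le_diamAt v _ j i) (hw_nonneg i j _)
      _ = diamAt v (σ - τ) := by rw [← Finset.sum_mul, hw_sum, one_mul]
  -- fundamental theorem of calculus for v and x
  have hsub : ∀ {a b : ℝ}, 0 ≤ a → Icc a b ⊆ Ici (-τ) := by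
    intro a b ha
    refine subset_trans Icc_subset_Ici_self ?_
    intro u hu
    simp only [mem_Ici] at *
    linarith
  have vFTC : ∀ (i) (a b : ℝ), 0 ≤ a → a ≤ b →
      v i b - v i a = ∫ σ in a..b, V i σ := by
    intro i a b ha hab
    rw [intervalIntegral.integral_eq_sub_of_hasDeriv_right_of_le hab
      ((hvc i).mono (hsub ha))
      (fun σ hσ => (hv'' i σ (lt_of_le_of_lt ha hσ.1)).hasDerivWithinAt)
      (by
        have := ((hVc i).mono (Icc_subset_Ici_self.trans (Ici_subset_Ici.mpr ha) :
          Icc a b ⊆ Ici 0))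
        rw [← uIcc_of_le hab] at this
        exact this.intervalIntegrable)]
  have xFTC : ∀ (i) (a b : ℝ), 0 ≤ a → a ≤ b →
      x i b - x i a = ∫ σ in a..b, v i σ := by
    intro i a b ha hab
    rw [intervalIntegral.integral_eq_sub_of_hasDeriv_right_of_le hab
      ((hxc i).mono (hsub ha))
      (fun σ hσ => (hx' i σ (lt_of_le_of_lt ha hσ.1)).hasDerivWithinAt)
      (by
        have h2 : ContinuousOn (v i) (Icc a b) := (hvc i).mono (hsub (b := b) ha)
        rw [← uIcc_of_le hab] at h2
        exact h2.intervalIntegrable)]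
  -- bound on velocity increments
  have vseg : ∀ (i) (a b : ℝ), 0 ≤ a → a ≤ b →
      (∀ u ∈ Icc a b, diamAt v (u - τ) ≤ dv0 * exp (-C * (u - τ))) →
      ‖v i b - v i a‖ ≤ dv0 / C * (exp (-C * (a - τ)) - exp (-C * (b - τ))) := by
    intro i a b ha hab hbound
    rw [vFTC i a b ha hab, ← expint a b hab]
    have hVi : IntervalIntegrable (V i) MeasureTheory.volume a b := by
      have := ((hVc i).mono (Icc_subset_Ici_self.trans (Ici_subset_Ici.mpr ha) :
        Icc a b ⊆ Ici 0))
      rw [← uIcc_of_le hab] at this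
      exact this.intervalIntegrable
    have hgint : IntervalIntegrable (fun σ : ℝ => dv0 * exp (-C * (σ - τ)))
        MeasureTheory.volume a b := (hexpcont C dv0 τ).intervalIntegrable a b
    calc ‖∫ σ in a..b, V i σ‖ ≤ ∫ σ in a..b, ‖V i σ‖ :=
          intervalIntegral.norm_integral_le_integral_norm hab
      _ ≤ ∫ σ in a..b, dv0 * exp (-C * (σ - τ)) := by
          apply intervalIntegral.integral_mono_on hab hVi.norm hgint
          intro u hu
          exact le_trans (hVnorm i u) (hbound u hu)
  -- key contraction estimate from normalized weights
  have hBkey : ∀ (s : ℝ) (i k : Fin N),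
      (∀ j l : Fin N, ‖x j s - x l s‖ ≤ u0) →
      ‖∑ j, (w i j s - w k j s) • v j s‖ ≤ (1 - Psi ψ u0) * diamAt v s := by
    intro s i k hxb
    set P := Psi ψ u0 with hPdef
    set D := diamAt v s with hDdef
    have hD_nonneg : 0 ≤ D := diamAt_nonneg hN0 v s
    have h1P : 0 ≤ 1 - P := by linarith [hPsi_le_one]
    have hwlb : ∀ (i' j : Fin N), P / N ≤ w i' j s := by
      intro i' j
      apply div_le_div₀ (le_of_lt (hψpos _ (norm_nonneg _)))
        (hPsi_le _ (norm_nonneg _) (hxb j i')) (hsum_pos i' s) (hsum_leN i' s)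
    set μ : Fin N → ℝ := fun j => min (w i j s) (w k j s) with hμdef
    set A : Fin N → ℝ := fun j => w i j s - μ j with hAdef
    set B : Fin N → ℝ := fun j => w k j s - μ j with hBdef
    set ρ : ℝ := ∑ j, A j with hρdef
    have hA_nonneg : ∀ j, 0 ≤ A j := fun j => sub_nonneg.mpr (min_le_left _ _)
    have hB_nonneg : ∀ j, 0 ≤ B j := fun j => sub_nonneg.mpr (min_le_right _ _)
    have hρA : ρ = 1 - ∑ j, μ j := by
      rw [hρdef, hAdef]
      rw [Finset.sum_sub_distrib, hw_sum]
    have hB_sum : ∑ j, B j = ρ := by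
      rw [hBdef, Finset.sum_sub_distrib, hw_sum, hρA]
    have hρ_nonneg : 0 ≤ ρ := Finset.sum_nonneg (fun j _ => hA_nonneg j)
    have hμ_sum : P ≤ ∑ j, μ j := by
      have : ∑ _j : Fin N, P / N ≤ ∑ j, μ j :=
        Finset.sum_le_sum (fun j _ => le_min (hwlb i j) (hwlb k j))
      have hcard : ∑ _j : Fin N, P / N = (N : ℝ) * (P / N) := by
        rw [Finset.sum_const, Finset.card_univ, Fintype.card_fin, nsmul_eq_mul]
      have hNne : (N : ℝ) ≠ 0 := Nat.cast_ne_zero.mpr (Nat.pos_iff_ne_zero.mp hN0)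
      rw [hcard, mul_div_cancel₀ _ hNne] at this
      exact this
    have hρ_le : ρ ≤ 1 - P := by rw [hρA]; linarith
    have hsplit : (∑ j, (w i j s - w k j s) • v j s) =
        (∑ j, A j • v j s) - ∑ j, B j • v j s := by
      rw [← Finset.sum_sub_distrib]
      congr 1
      funext j
      rw [← sub_smul]
      congr 1
      rw [hAdef, hBdef]
      ring
    rw [hsplit]
    rcases eq_or_lt_of_le hρ_nonneg with hρ0 | hρ0
    · have hAz : ∀ j ∈ Finset.univ, A j = 0 :=
        (Finset.sum_eq_zero_iff_of_nonneg (fun j _ => hA_nonneg j)).mp hρ0.symm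
      have hBz : ∀ j ∈ Finset.univ, B j = 0 := by
        apply (Finset.sum_eq_zero_iff_of_nonneg (fun j _ => hB_nonneg j)).mp
        rw [hB_sum, ← hρ0]
      have : (∑ j, A j • v j s) - ∑ j, B j • v j s = 0 := by
        rw [Finset.sum_eq_zero (fun j hj => by rw [hAz j hj, zero_smul]),
          Finset.sum_eq_zero (fun j hj => by rw [hBz j hj, zero_smul]), sub_zero]
      rw [this, norm_zero]
      exact mul_nonneg h1P hD_nonneg
    · -- case ρ > 0
      have e1 : ∑ j, ∑ l, (A j * B l) • v j s = ρ • ∑ j, A j • v j s := by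
        rw [Finset.smul_sum]
        apply Finset.sum_congr rfl
        intro j _
        rw [← Finset.sum_smul, ← Finset.mul_sum, hB_sum, smul_smul, mul_comm]
      have e2 : ∑ j : Fin N, ∑ l, (A j * B l) • v l s = ρ • ∑ l, B l • v l s := by
        rw [Finset.sum_comm, Finset.smul_sum]
        apply Finset.sum_congr rfl
        intro l _
        rw [← Finset.sum_smul, ← Finset.sum_mul, ← hρdef, smul_smul]
      have hkey : ρ • ((∑ j, A j • v j s) - ∑ j, B j • v j s) =
          ∑ j, ∑ l, (A j * B l) • (v j s - v l s) := by
        have expand : (∑ j, ∑ l, (A j * B l) • (v j s - v l s))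
            = (∑ j, ∑ l, (A j * B l) • v j s) - ∑ j : Fin N, ∑ l, (A j * B l) • v l s := by
          simp only [smul_sub, Finset.sum_sub_distrib]
        rw [expand, e1, e2, smul_sub]
      have hnormbound : ‖∑ j, ∑ l, (A j * B l) • (v j s - v l s)‖ ≤ ρ * (ρ * D) := by
        calc ‖∑ j, ∑ l, (A j * B l) • (v j s - v l s)‖
            ≤ ∑ j, ‖∑ l, (A j * B l) • (v j s - v l s)‖ := norm_sum_le _ _
          _ ≤ ∑ j, ∑ l, ‖(A j * B l) • (v j s - v l s)‖ :=
              Finset.sum_le_sum (fun j _ => norm_sum_le _ _)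
          _ ≤ ∑ j, ∑ l, (A j * B l) * D := by
              apply Finset.sum_le_sum
              intro j _
              apply Finset.sum_le_sum
              intro l _
              rw [norm_smul, Real.norm_eq_abs,
                abs_of_nonneg (mul_nonneg (hA_nonneg j) (hB_nonneg l))]
              exact mul_le_mul_of_nonneg_left (norm_le_diamAt v s j l)
                (mul_nonneg (hA_nonneg j) (hB_nonneg l))
          _ = ρ * (ρ * D) := by
              have inner : ∀ j : Fin N, (∑ l, A j * B l * D) = A j * (ρ * D) := by
                intro j
                rw [← Finset.sum_mul, ← Finset.mul_sum, hB_sum, mul_assoc]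
              rw [Finset.sum_congr rfl (fun j _ => inner j), ← Finset.sum_mul, ← hρdef]
      have hfinal : ρ * ‖(∑ j, A j • v j s) - ∑ j, B j • v j s‖ ≤ ρ * (ρ * D) := by
        calc ρ * ‖(∑ j, A j • v j s) - ∑ j, B j • v j s‖
            = ‖ρ • ((∑ j, A j • v j s) - ∑ j, B j • v j s)‖ := by
              rw [norm_smul, Real.norm_eq_abs, abs_of_pos hρ0]
          _ = ‖∑ j, ∑ l, (A j * B l) • (v j s - v l s)‖ := by rw [hkey]
          _ ≤ ρ * (ρ * D) := hnormbound
      have hmain := le_of_mul_le_mul_left hfinal hρ0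
      calc ‖(∑ j, A j • v j s) - ∑ j, B j • v j s‖ ≤ ρ * D := hmain
        _ ≤ (1 - P) * D := mul_le_mul_of_nonneg_right hρ_le hD_nonneg
  -- base-case bound on [-τ, 0]
  have hbase : ∀ t, -τ ≤ t → t ≤ 0 → diamAt v t ≤ dv0 * exp (-C * t) := by
    intro t ht1 ht2
    rw [hv_init_eq t ⟨ht1, ht2⟩, ← hdv0_eq]
    have h1 : 1 ≤ exp (-C * t) := one_le_exp (by nlinarith)
    nlinarith [hdv0_nonneg]
  -- the main induction on time intervals of length τ
  have main : ∀ k : ℕ, ∀ t, -τ ≤ t → t ≤ (k : ℝ) * τ → diamAt v t ≤ dv0 * exp (-C * t) := by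
    intro k
    induction k with
    | zero =>
      intro t ht1 ht2
      exact hbase t ht1 (by simpa using ht2)
    | succ k IH =>
      intro t ht1 ht2
      rcases le_or_gt t 0 with htneg | htpos
      · exact hbase t ht1 htneg
      have ht2' : t ≤ ((k : ℝ) + 1) * τ := by push_cast at ht2; linarith
      -- x-distance bound up to time k·τ
      have hxb : ∀ s, -τ ≤ s → s ≤ (k : ℝ) * τ → ∀ j l : Fin N, ‖x j s - x l s‖ ≤ u0 := by
        intro s hs1 hs2 j l
        have hdvC : 0 ≤ dv0 / C := div_nonneg hdv0_nonneg hC0.le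
        rcases le_or_gt s 0 with h | h
        · refine le_trans (le_trans (norm_le_diamAt x s j l) (hdx_init s ⟨hs1, h⟩)) ?_
          rw [hu0def]
          linarith
        · have hxj := xFTC j 0 s le_rfl h.le
          have hxl := xFTC l 0 s le_rfl h.le
          have hvint : ∀ m : Fin N, IntervalIntegrable (v m) MeasureTheory.volume 0 s := by
            intro m
            have h2 : ContinuousOn (v m) (Icc 0 s) := (hvc m).mono (hsub (b := s) le_rfl)
            rw [← uIcc_of_le h.le] at h2
            exact h2.intervalIntegrable
          have hdiff : x j s - x l s = (x j 0 - x l 0) + ∫ u in (0:ℝ)..s, (v j u - v l u) := by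
            rw [intervalIntegral.integral_sub (hvint j) (hvint l), ← hxj, ← hxl]
            abel
          have hgint : IntervalIntegrable (fun u : ℝ => dv0 * exp (-C * (u - 0)))
              MeasureTheory.volume 0 s := (hexpcont C dv0 0).intervalIntegrable 0 s
          have hIbd : ‖∫ u in (0:ℝ)..s, (v j u - v l u)‖ ≤ dv0 / C := by
            have h1 : ‖∫ u in (0:ℝ)..s, (v j u - v l u)‖ ≤
                ∫ u in (0:ℝ)..s, ‖v j u - v l u‖ :=
              intervalIntegral.norm_integral_le_integral_norm h.le
            have h2 : ∫ u in (0:ℝ)..s, ‖v j u - v l u‖ ≤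
                ∫ u in (0:ℝ)..s, dv0 * exp (-C * (u - 0)) := by
              apply intervalIntegral.integral_mono_on h.le _ hgint
              · intro u hu
                refine le_trans (norm_le_diamAt v u j l) ?_
                have := IH u (by linarith [hu.1]) (le_trans hu.2 hs2)
                simpa using this
              · have h3 : ContinuousOn (fun u => ‖v j u - v l u‖) (Icc 0 s) :=
                  (((hvc j).mono (hsub (b := s) le_rfl)).sub
                    ((hvc l).mono (hsub (b := s) le_rfl))).norm
                rw [← uIcc_of_le h.le] at h3
                exact h3.intervalIntegrable
            have h4 : ∫ u in (0:ℝ)..s, dv0 * exp (-C * (u - 0)) =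
                dv0 / C * (exp (-C * (0 - 0)) - exp (-C * (s - 0))) :=
              expint' C dv0 0 0 s (ne_of_gt hC0)
            have h5 : dv0 / C * (exp (-C * ((0:ℝ) - 0)) - exp (-C * (s - 0))) ≤ dv0 / C := by
              have h6 : 0 < exp (-C * (s - 0)) := exp_pos _
              have h7 : exp (-C * ((0:ℝ) - 0)) = 1 := by norm_num
              rw [h7]
              nlinarith [div_nonneg hdv0_nonneg hC0.le]
            linarith
          calc ‖x j s - x l s‖ ≤ ‖x j 0 - x l 0‖ + ‖∫ u in (0:ℝ)..s, (v j u - v l u)‖ := by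
                rw [hdiff]; exact norm_add_le _ _
            _ ≤ dx0 + dv0 / C := by
                have := le_trans (norm_le_diamAt x 0 j l) (hdx_init 0 h0mem)
                linarith
            _ = u0 := hu0def.symm
      -- delayed diameter bound
      have hDdel : ∀ u, 0 ≤ u → u ≤ ((k : ℝ) + 1) * τ →
          diamAt v (u - τ) ≤ dv0 * exp (-C * (u - τ)) := by
        intro u hu0 hu1
        rcases le_or_gt (u - τ) 0 with h | h
        · exact hbase (u - τ) (by linarith) h
        · exact IH (u - τ) (by linarith) (by linarith)
      -- velocity increments over one delay interval
      have hvincr : ∀ (i : Fin N) (σ : ℝ), 0 ≤ σ → σ ≤ ((k : ℝ) + 1) * τ →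
          ‖v i σ - v i (σ - τ)‖ ≤ K * (dv0 * exp (-C * σ)) := by
        intro i σ hσ0 hσ1
        set m := max (σ - τ) 0 with hmdef
        have hm0 : 0 ≤ m := le_max_right _ _
        have hm1 : σ - τ ≤ m := le_max_left _ _
        have hmσ : m ≤ σ := max_le (by linarith) hσ0
        have hveq : v i (σ - τ) = v i m := by
          rcases le_or_gt (σ - τ) 0 with h | h
          · rw [hconst i _ ⟨by linarith, h⟩, hmdef, max_eq_right h]
          · rw [hmdef, max_eq_left h.le]
        rw [hveq]
        have hseg := vseg i m σ hm0 hmσ (fun u hu =>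
          hDdel u (le_trans hm0 hu.1) (le_trans hu.2 hσ1))
        refine le_trans hseg ?_
        have h1 : exp (-C * (m - τ)) ≤ exp (-C * (σ - 2 * τ)) := by
          apply exp_le_exp.mpr
          nlinarith [mul_le_mul_of_nonneg_left hm1 hC0.le]
        have heq : K * (dv0 * exp (-C * σ)) =
            dv0 / C * (exp (-C * (σ - 2 * τ)) - exp (-C * (σ - τ))) := by
          rw [show -C * (σ - 2 * τ) = C * τ + (C * τ + -C * σ) by ring,
            show -C * (σ - τ) = C * τ + -C * σ by ring, exp_add, exp_add, hKdef]
          field_simp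
        rw [heq]
        have hd : 0 ≤ dv0 / C := div_nonneg hdv0_nonneg hC0.le
        apply mul_le_mul_of_nonneg_left _ hd
        linarith
      -- the pairwise estimate at time t
      have pairbound : ∀ i k' : Fin N, ‖v i t - v k' t‖ ≤ dv0 * exp (-C * t) := by
        intro i k'
        set g : ℝ → EuclideanSpace ℝ (Fin d) := fun σ => exp σ • (v i σ - v k' σ) with hgdef
        set G : ℝ → EuclideanSpace ℝ (Fin d) :=
          fun σ => exp σ • (V i σ - V k' σ + (v i σ - v k' σ)) with hGdef
        have hIci : Ici (0:ℝ) ⊆ Ici (-τ) := Ici_subset_Ici.mpr (by linarith)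
        have hGc : ContinuousOn G (Ici (0:ℝ)) :=
          (continuous_exp.continuousOn).smul (((hVc i).sub (hVc k')).add
            (((hvc i).mono hIci).sub ((hvc k').mono hIci)))
        have hgc : ContinuousOn g (Ici (0:ℝ)) :=
          (continuous_exp.continuousOn).smul
            (((hvc i).mono hIci).sub ((hvc k').mono hIci))
        have hgderiv : ∀ σ ∈ Ioo (0:ℝ) t, HasDerivWithinAt g (G σ) (Ioi σ) σ := by
          intro σ hσ
          have h1 : HasDerivAt (fun σ => v i σ - v k' σ) (V i σ - V k' σ) σ :=
            (hv'' i σ hσ.1).sub (hv'' k' σ hσ.1)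
          have h2 := (Real.hasDerivAt_exp σ).smul h1
          have h3 : HasDerivAt g (G σ) σ := by
            rw [hgdef, hGdef]
            refine h2.congr_deriv ?_
            exact (smul_add (exp σ) (V i σ - V k' σ) (v i σ - v k' σ)).symm
          exact h3.hasDerivWithinAt
        have hGint : IntervalIntegrable G MeasureTheory.volume 0 t := by
          have h2 : ContinuousOn G (Icc 0 t) :=
            hGc.mono (Icc_subset_Ici_self)
          rw [← uIcc_of_le htpos.le] at h2
          exact h2.intervalIntegrable
        have hgFTC : g t - g 0 = ∫ σ in (0:ℝ)..t, G σ := by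
          rw [intervalIntegral.integral_eq_sub_of_hasDeriv_right_of_le htpos.le
            (hgc.mono Icc_subset_Ici_self) hgderiv hGint]
        -- pointwise bound on G
        have hGbd : ∀ σ ∈ Icc (0:ℝ) t, ‖G σ‖ ≤ (1 - C) * (dv0 * exp ((1 - C) * σ)) := by
          intro σ hσ
          have hσ1 : σ ≤ ((k : ℝ) + 1) * τ := le_trans hσ.2 ht2'
          have hVsplit : ∀ (i' : Fin N), V i' σ =
              (∑ j, w i' j (σ - τ) • v j (σ - τ)) - v i' (σ - τ) := by
            intro i'
            rw [hVdef]
            simp only [smul_sub]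
            rw [Finset.sum_sub_distrib, ← Finset.sum_smul, hw_sum, one_smul]
          have hdecomp : V i σ - V k' σ + (v i σ - v k' σ) =
              (∑ j, (w i j (σ - τ) - w k' j (σ - τ)) • v j (σ - τ)) +
              ((v i σ - v i (σ - τ)) - (v k' σ - v k' (σ - τ))) := by
            rw [hVsplit i, hVsplit k']
            simp only [sub_smul]
            rw [Finset.sum_sub_distrib]
            abel
          have hxs : ∀ j l : Fin N, ‖x j (σ - τ) - x l (σ - τ)‖ ≤ u0 :=
            hxb (σ - τ) (by linarith [hσ.1]) (by linarith) 
          have hB := hBkey (σ - τ) i k' hxs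
          have hDd : diamAt v (σ - τ) ≤ dv0 * exp (-C * (σ - τ)) := hDdel σ hσ.1 hσ1
          have h1P : 0 ≤ 1 - Psi ψ u0 := by linarith [hPsi_le_one]
          have hnX : ‖V i σ - V k' σ + (v i σ - v k' σ)‖ ≤
              (1 - Psi ψ u0) * (dv0 * exp (-C * (σ - τ))) +
              (K * (dv0 * exp (-C * σ)) + K * (dv0 * exp (-C * σ))) := by
            rw [hdecomp]
            refine le_trans (norm_add_le _ _) ?_
            have hB2 : ‖∑ j, (w i j (σ - τ) - w k' j (σ - τ)) • v j (σ - τ)‖ ≤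
                (1 - Psi ψ u0) * (dv0 * exp (-C * (σ - τ))) :=
              le_trans hB (mul_le_mul_of_nonneg_left hDd h1P)
            have hI2 : ‖(v i σ - v i (σ - τ)) - (v k' σ - v k' (σ - τ))‖ ≤
                K * (dv0 * exp (-C * σ)) + K * (dv0 * exp (-C * σ)) :=
              le_trans (norm_sub_le _ _)
                (add_le_add (hvincr i σ hσ.1 hσ1) (hvincr k' σ hσ.1 hσ1))
            linarith
          have hnG : ‖G σ‖ = exp σ * ‖V i σ - V k' σ + (v i σ - v k' σ)‖ := by
            rw [hGdef]
            rw [norm_smul, Real.norm_eq_abs, abs_of_pos (exp_pos σ)]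
          rw [hnG]
          have hrw : exp (-C * (σ - τ)) = exp (C * τ) * exp (-C * σ) := by
            rw [← exp_add]
            ring_nf
          have e1 : exp ((1 - C) * σ) = exp σ * exp (-C * σ) := by
            rw [← exp_add]
            ring_nf
          calc exp σ * ‖V i σ - V k' σ + (v i σ - v k' σ)‖
              ≤ exp σ * (dv0 * exp (-C * σ) * ((1 - Psi ψ u0) * exp (C * τ) + 2 * K)) := by
                apply mul_le_mul_of_nonneg_left _ (exp_pos σ).le
                refine le_trans hnX (le_of_eq ?_)
                rw [hrw]
                ring
            _ ≤ exp σ * (dv0 * exp (-C * σ) * (1 - C)) := by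
                apply mul_le_mul_of_nonneg_left _ (exp_pos σ).le
                exact mul_le_mul_of_nonneg_left harith
                  (mul_nonneg hdv0_nonneg (exp_pos _).le)
            _ = (1 - C) * (dv0 * exp ((1 - C) * σ)) := by
                rw [e1]
                ring
        -- integrate the bound
        have hbint : IntervalIntegrable (fun σ : ℝ => (1 - C) * (dv0 * exp ((1 - C) * σ)))
            MeasureTheory.volume 0 t :=
          (continuous_const.mul (continuous_const.mul
            ((continuous_const.mul continuous_id).rexp))).intervalIntegrable 0 t
        have hbval : ∫ σ in (0:ℝ)..t, (1 - C) * (dv0 * exp ((1 - C) * σ)) =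
            dv0 * exp ((1 - C) * t) - dv0 := by
          have hF : ∀ σ : ℝ, HasDerivAt (fun σ : ℝ => dv0 * exp ((1 - C) * σ))
              ((1 - C) * (dv0 * exp ((1 - C) * σ))) σ := by
            intro σ
            have h1 : HasDerivAt (fun σ : ℝ => (1 - C) * σ) (1 - C) σ := by
              simpa using (hasDerivAt_id σ).const_mul (1 - C)
            have h2 := (h1.exp).const_mul dv0
            refine h2.congr_deriv ?_
            ring
          rw [intervalIntegral.integral_eq_sub_of_hasDerivAt (fun σ _ => hF σ)
            ((continuous_const.mul (continuous_const.mul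
              ((continuous_const.mul continuous_id).rexp))).intervalIntegrable 0 t)]
          simp
        have hnormint : ‖∫ σ in (0:ℝ)..t, G σ‖ ≤ dv0 * exp ((1 - C) * t) - dv0 := by
          rw [← hbval]
          calc ‖∫ σ in (0:ℝ)..t, G σ‖ ≤ ∫ σ in (0:ℝ)..t, ‖G σ‖ :=
                intervalIntegral.norm_integral_le_integral_norm htpos.le
            _ ≤ ∫ σ in (0:ℝ)..t, (1 - C) * (dv0 * exp ((1 - C) * σ)) := by
                apply intervalIntegral.integral_mono_on htpos.le hGint.norm hbint hGbd
        have hg0 : ‖g 0‖ ≤ dv0 := by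
          rw [hgdef]
          simp only [exp_zero, one_smul]
          rw [hdv0_eq]
          exact norm_le_diamAt v 0 i k'
        have hgt : ‖g t‖ ≤ dv0 * exp ((1 - C) * t) := by
          calc ‖g t‖ = ‖g 0 + (g t - g 0)‖ := by
                congr 1
                abel
            _ ≤ ‖g 0‖ + ‖g t - g 0‖ := norm_add_le _ _
            _ ≤ dv0 + (dv0 * exp ((1 - C) * t) - dv0) := by
                rw [hgFTC]
                exact add_le_add hg0 hnormint
            _ = dv0 * exp ((1 - C) * t) := by ring
        have hgt2 : exp t * ‖v i t - v k' t‖ ≤ (dv0 * exp (-C * t)) * exp t := by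
          have h1 : ‖g t‖ = exp t * ‖v i t - v k' t‖ := by
            rw [hgdef, norm_smul, Real.norm_eq_abs, abs_of_pos (exp_pos t)]
          have h2 : dv0 * exp ((1 - C) * t) = (dv0 * exp (-C * t)) * exp t := by
            rw [show (1 - C) * t = -C * t + t by ring, exp_add]
            ring
          rw [← h1, ← h2]
          exact hgt
        have hgt3 : ‖v i t - v k' t‖ * exp t ≤ (dv0 * exp (-C * t)) * exp t := by
          linarith [hgt2]
        exact le_of_mul_le_mul_right hgt3 (exp_pos t)
      exact diamAt_le hN0 v t pairbound
  -- full-time exponential decay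
  have hfull : ∀ t, 0 ≤ t → diamAt v t ≤ dv0 * exp (-C * t) := by
    intro t ht
    exact main ⌈t / τ⌉₊ t (by linarith) ((div_le_iff₀ hτ).mp (Nat.le_ceil _))
  -- position bound for all nonnegative times
  have hxfull : ∀ s, 0 ≤ s → ∀ j l : Fin N, ‖x j s - x l s‖ ≤ u0 := by
    intro s hs j l
    have hdvC : 0 ≤ dv0 / C := div_nonneg hdv0_nonneg hC0.le
    rcases eq_or_lt_of_le hs with h | h
    · refine le_trans (le_trans (norm_le_diamAt x s j l) (hdx_init s ⟨by linarith, h.symm.le⟩)) ?_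
      rw [hu0def]
      linarith
    · have hxj := xFTC j 0 s le_rfl h.le
      have hxl := xFTC l 0 s le_rfl h.le
      have hvint : ∀ m : Fin N, IntervalIntegrable (v m) MeasureTheory.volume 0 s := by
        intro m
        have h2 : ContinuousOn (v m) (Icc 0 s) := (hvc m).mono (hsub (b := s) le_rfl)
        rw [← uIcc_of_le h.le] at h2
        exact h2.intervalIntegrable
      have hdiff : x j s - x l s = (x j 0 - x l 0) + ∫ u in (0:ℝ)..s, (v j u - v l u) := by
        rw [intervalIntegral.integral_sub (hvint j) (hvint l), ← hxj, ← hxl]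
        abel
      have hgint : IntervalIntegrable (fun u : ℝ => dv0 * exp (-C * (u - 0)))
          MeasureTheory.volume 0 s := (hexpcont C dv0 0).intervalIntegrable 0 s
      have hIbd : ‖∫ u in (0:ℝ)..s, (v j u - v l u)‖ ≤ dv0 / C := by
        have h1 : ‖∫ u in (0:ℝ)..s, (v j u - v l u)‖ ≤
            ∫ u in (0:ℝ)..s, ‖v j u - v l u‖ :=
          intervalIntegral.norm_integral_le_integral_norm h.le
        have h2 : ∫ u in (0:ℝ)..s, ‖v j u - v l u‖ ≤
            ∫ u in (0:ℝ)..s, dv0 * exp (-C * (u - 0)) := by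
          apply intervalIntegral.integral_mono_on h.le _ hgint
          · intro u hu
            refine le_trans (norm_le_diamAt v u j l) ?_
            have := hfull u hu.1
            simpa using this
          · have h3 : ContinuousOn (fun u => ‖v j u - v l u‖) (Icc 0 s) :=
              (((hvc j).mono (hsub (b := s) le_rfl)).sub
                ((hvc l).mono (hsub (b := s) le_rfl))).norm
            rw [← uIcc_of_le h.le] at h3
            exact h3.intervalIntegrable
        have h4 : ∫ u in (0:ℝ)..s, dv0 * exp (-C * (u - 0)) =
            dv0 / C * (exp (-C * (0 - 0)) - exp (-C * (s - 0))) :=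
          expint' C dv0 0 0 s (ne_of_gt hC0)
        have h5 : dv0 / C * (exp (-C * ((0:ℝ) - 0)) - exp (-C * (s - 0))) ≤ dv0 / C := by
          have h6 : 0 < exp (-C * (s - 0)) := exp_pos _
          have h7 : exp (-C * ((0:ℝ) - 0)) = 1 := by norm_num
          rw [h7]
          nlinarith
        linarith
      calc ‖x j s - x l s‖ ≤ ‖x j 0 - x l 0‖ + ‖∫ u in (0:ℝ)..s, (v j u - v l u)‖ := by
            rw [hdiff]; exact norm_add_le _ _
        _ ≤ dx0 + dv0 / C := by
            have := le_trans (norm_le_diamAt x 0 j l) (hdx_init 0 h0mem)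
            linarith
        _ = u0 := hu0def.symm
  refine ⟨⟨u0, ?_⟩, ?_, fun t ht => hfull t ht⟩
  · rintro _ ⟨s, hs, rfl⟩
    exact diamAt_le hN0 x s (fun i k => hxfull s hs i k)
  · -- convergence of the velocity diameter to zero
    have hlim : Tendsto (fun t : ℝ => dv0 * exp (-C * t)) atTop (nhds 0) := by
      have h1 : Tendsto (fun t : ℝ => C * t) atTop atTop :=
        Tendsto.const_mul_atTop hC0 tendsto_id
      have h2 : Tendsto (fun t : ℝ => exp (-(C * t))) atTop (nhds 0) :=
        tendsto_exp_neg_atTop_nhds_zero.comp h1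
      have h3 := h2.const_mul dv0
      rw [mul_zero] at h3
      refine h3.congr (fun t => ?_)
      rw [neg_mul]
    apply squeeze_zero' (f := diamAt v) (g := fun t : ℝ => dv0 * exp (-C * t))
      (t₀ := atTop) ?_ ?_ hlim
    · filter_upwards [eventually_ge_atTop (0:ℝ)] with t ht
      exact diamAt_nonneg hN0 v t
    · filter_upwards [eventually_ge_atTop (0:ℝ)] with t ht
      exact hfull t ht
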